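/- Downward-closed partial snowflake join invariance (core of the proof of Lemma 5.3): For a snowflake query with PKFK joins and every downward-closed set s of dimension vertices, the partial snowflake join satisfies (J(s)).card = (R₀').card. -/

import Mathlib

open Finset

/-- The partial snowflake join `J(s)` of the filtered fact table `R₀'` with the filtered
dimension tables `A v` for `v ∈ s`: the pairs `(a, f)` with `a ∈ R₀'`,
`f ∈ s.pi (fun v => A v.1 v.2)`, `phead i a (f ⟨i, 0⟩)` whenever `⟨i, 0⟩ ∈ s`, and
`pstep i j (f ⟨i, j⟩) (f ⟨i, j+1⟩)` whenever `⟨i, j+1⟩ ∈ s` (with `⟨i, j⟩ ∈ s` by downward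
closure). -/
def snowPartialJoin {α : Type*} {m : ℕ} {n : Fin m → ℕ}
    {β : ∀ i : Fin m, Fin (n i + 1) → Type*}
    (R₀' : Finset α) (A : ∀ i j, Finset (β i j))
    (phead : ∀ i, α → β i 0 → Prop) [∀ i a b, Decidable (phead i a b)]
    (pstep : ∀ i (j : Fin (n i)), β i j.castSucc → β i j.succ → Prop)
    [∀ i j b b', Decidable (pstep i j b b')]
    (s : Finset (Σ i : Fin m, Fin (n i + 1))) :
    Finset (α × ∀ v ∈ s, β v.1 v.2) :=
  (R₀' ×ˢ s.pi fun v => A v.1 v.2).filter fun x =>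
    (∀ (i : Fin m) (h : (⟨i, 0⟩ : Σ i : Fin m, Fin (n i + 1)) ∈ s),
        phead i x.1 (x.2 ⟨i, 0⟩ h)) ∧
      (∀ (i : Fin m) (j : Fin (n i))
        (h : (⟨i, j.succ⟩ : Σ i : Fin m, Fin (n i + 1)) ∈ s)
        (h' : (⟨i, j.castSucc⟩ : Σ i : Fin m, Fin (n i + 1)) ∈ s),
        pstep i j (x.2 ⟨i, j.castSucc⟩ h') (x.2 ⟨i, j.succ⟩ h))

section SnowAux

variable {α : Type*} {m : ℕ} {n : Fin m → ℕ}
    {β : ∀ i : Fin m, Fin (n i + 1) → Type*}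

lemma snow_sigma_snd {i : Fin m} {j j' : Fin (n i + 1)}
    (h : (⟨i, j⟩ : Σ i : Fin m, Fin (n i + 1)) = ⟨i, j'⟩) : j = j' := by
  simpa using h

lemma mem_snowPartialJoin
    (R₀' : Finset α) (A : ∀ i j, Finset (β i j))
    (phead : ∀ i, α → β i 0 → Prop) [∀ i a b, Decidable (phead i a b)]
    (pstep : ∀ i (j : Fin (n i)), β i j.castSucc → β i j.succ → Prop)
    [∀ i j b b', Decidable (pstep i j b b')]
    (s : Finset (Σ i : Fin m, Fin (n i + 1)))
    (x : α × ∀ v ∈ s, β v.1 v.2) :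
    x ∈ snowPartialJoin R₀' A phead pstep s ↔
      x.1 ∈ R₀' ∧ (∀ w (hw : w ∈ s), x.2 w hw ∈ A w.1 w.2) ∧
      (∀ (i : Fin m) (h : (⟨i, 0⟩ : Σ i : Fin m, Fin (n i + 1)) ∈ s),
        phead i x.1 (x.2 ⟨i, 0⟩ h)) ∧
      (∀ (i : Fin m) (j : Fin (n i))
        (h : (⟨i, j.succ⟩ : Σ i : Fin m, Fin (n i + 1)) ∈ s)
        (h' : (⟨i, j.castSucc⟩ : Σ i : Fin m, Fin (n i + 1)) ∈ s),
        pstep i j (x.2 ⟨i, j.castSucc⟩ h') (x.2 ⟨i, j.succ⟩ h)) := by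
  simp [snowPartialJoin, Finset.mem_filter, Finset.mem_product, Finset.mem_pi, and_assoc]

/-- Extend a function on `s.erase v` to `s` by assigning `b` at `v`. -/
def snowExt (s : Finset (Σ i : Fin m, Fin (n i + 1)))
    (v : Σ i : Fin m, Fin (n i + 1)) (hv : v ∈ s)
    (g : ∀ w ∈ s.erase v, β w.1 w.2) (b : β v.1 v.2) :
    ∀ w ∈ s, β w.1 w.2 :=
  fun w hw => Finset.Pi.cons (s.erase v) v b g w
    (by rw [Finset.insert_erase hv]; exact hw)

lemma snowExt_same (s : Finset (Σ i : Fin m, Fin (n i + 1)))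
    (v : Σ i : Fin m, Fin (n i + 1)) (hv : v ∈ s)
    (g : ∀ w ∈ s.erase v, β w.1 w.2) (b : β v.1 v.2) (h : v ∈ s) :
    snowExt s v hv g b v h = b :=
  Finset.Pi.cons_same _ _ _ _ _

lemma snowExt_ne (s : Finset (Σ i : Fin m, Fin (n i + 1)))
    (v : Σ i : Fin m, Fin (n i + 1)) (hv : v ∈ s)
    (g : ∀ w ∈ s.erase v, β w.1 w.2) (b : β v.1 v.2)
    {w : Σ i : Fin m, Fin (n i + 1)} (hw : w ∈ s) (hne : w ≠ v) :
    snowExt s v hv g b w hw = g w (Finset.mem_erase.mpr ⟨hne, hw⟩) := by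
  unfold snowExt
  rw [Finset.Pi.cons_ne (Ne.symm hne)]

lemma snow_erase
    (R : ∀ i j, Finset (β i j))
    (phead : ∀ i, α → β i 0 → Prop) [∀ i a b, Decidable (phead i a b)]
    (pstep : ∀ i (j : Fin (n i)), β i j.castSucc → β i j.succ → Prop)
    [∀ i j b b', Decidable (pstep i j b b')]
    (hkeyhead : ∀ (i : Fin m) (a : α), ∀ b₁ ∈ R i 0, ∀ b₂ ∈ R i 0,
      phead i a b₁ → phead i a b₂ → b₁ = b₂)
    (hkeystep : ∀ (i : Fin m) (j : Fin (n i)) (b : β i j.castSucc),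
      ∀ b₁ ∈ R i j.succ, ∀ b₂ ∈ R i j.succ,
        pstep i j b b₁ → pstep i j b b₂ → b₁ = b₂)
    (A : ∀ i j, Finset (β i j)) (hAR : ∀ i j, A i j ⊆ R i j)
    (hAstep : ∀ (i : Fin m) (j : Fin (n i)), A i j.castSucc =
      (R i j.castSucc).filter fun b => ∃ b' ∈ A i j.succ, pstep i j b b')
    (R₀' : Finset α)
    (hhead : ∀ a ∈ R₀', ∀ i, ∃ b ∈ A i 0, phead i a b)
    (s : Finset (Σ i : Fin m, Fin (n i + 1)))
    (hdc : ∀ (i : Fin m) (j : Fin (n i)),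
        (⟨i, j.succ⟩ : Σ i : Fin m, Fin (n i + 1)) ∈ s →
          (⟨i, j.castSucc⟩ : Σ i : Fin m, Fin (n i + 1)) ∈ s)
    (i0 : Fin m) (jv : Fin (n i0 + 1))
    (hvmem : (⟨i0, jv⟩ : Σ i : Fin m, Fin (n i + 1)) ∈ s)
    (hmax : ∀ k : Fin (n i0), jv = k.castSucc →
      (⟨i0, k.succ⟩ : Σ i : Fin m, Fin (n i + 1)) ∉ s) :
    (snowPartialJoin R₀' A phead pstep s).card
      = (snowPartialJoin R₀' A phead pstep (s.erase ⟨i0, jv⟩)).card := by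
  classical
  set v : Σ i : Fin m, Fin (n i + 1) := ⟨i0, jv⟩ with hvdef
  set s' := s.erase v with hs'def
  -- extension of a pair
  set Ext : (α × ∀ w ∈ s', β w.1 w.2) → β i0 jv → (α × ∀ w ∈ s, β w.1 w.2) :=
    fun x b => (x.1, snowExt s v hvmem x.2 b) with hExt
  -- uniqueness of the extension value
  have uniq : ∀ (x : α × ∀ w ∈ s', β w.1 w.2) (b b' : β i0 jv),
      Ext x b ∈ snowPartialJoin R₀' A phead pstep s →
      Ext x b' ∈ snowPartialJoin R₀' A phead pstep s → b = b' := by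
    intro x b b' hb hb'
    rw [mem_snowPartialJoin] at hb hb'
    simp only [hExt] at hb hb'
    have hbm : b ∈ A i0 jv := by
      have h := hb.2.1 v hvmem; rwa [snowExt_same] at h
    have hbm' : b' ∈ A i0 jv := by
      have h := hb'.2.1 v hvmem; rwa [snowExt_same] at h
    rcases Fin.eq_zero_or_eq_succ jv with h0 | ⟨k, hk⟩
    · subst h0
      have h1 := hb.2.2.1 i0 hvmem
      have h2 := hb'.2.2.1 i0 hvmem
      rw [snowExt_same] at h1 h2
      exact hkeyhead i0 x.1 b (hAR _ _ hbm) b' (hAR _ _ hbm') h1 h2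
    · subst hk
      have hpredmem : (⟨i0, k.castSucc⟩ : Σ i : Fin m, Fin (n i + 1)) ∈ s :=
        hdc i0 k hvmem
      have h1 := hb.2.2.2 i0 k hvmem hpredmem
      have h2 := hb'.2.2.2 i0 k hvmem hpredmem
      have hpredne : (⟨i0, k.castSucc⟩ : Σ i : Fin m, Fin (n i + 1)) ≠ v := by
        intro h
        exact (Fin.castSucc_lt_succ (i := k)).ne (snow_sigma_snd h)
      rw [snowExt_same, snowExt_ne _ _ _ _ _ hpredmem hpredne] at h1 h2
      exact hkeystep i0 k _ b (hAR _ _ hbm) b' (hAR _ _ hbm') h1 h2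
  -- existence of the extension value
  have exist : ∀ x ∈ snowPartialJoin R₀' A phead pstep s',
      ∃ b : β i0 jv, Ext x b ∈ snowPartialJoin R₀' A phead pstep s := by
    intro x hx
    rw [mem_snowPartialJoin] at hx
    obtain ⟨hx1, hx2, hx3, hx4⟩ := hx
    -- find the matching element b
    have hbex : ∃ b ∈ A i0 jv,
        (∀ h0 : jv = 0, phead i0 x.1 (h0 ▸ b)) ∧
        (∀ (k : Fin (n i0)) (hk : jv = k.succ)
          (hp : (⟨i0, k.castSucc⟩ : Σ i : Fin m, Fin (n i + 1)) ∈ s'),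
          pstep i0 k (x.2 ⟨i0, k.castSucc⟩ hp) (hk ▸ b)) := by
      rcases Fin.eq_zero_or_eq_succ jv with h0 | ⟨k, hk⟩
      · subst h0
        obtain ⟨b, hbA, hbp⟩ := hhead x.1 hx1 i0
        exact ⟨b, hbA, fun _ => hbp, fun k hk _ => absurd hk.symm (Fin.succ_ne_zero k)⟩
      · subst hk
        have hpredmem : (⟨i0, k.castSucc⟩ : Σ i : Fin m, Fin (n i + 1)) ∈ s :=
          hdc i0 k hvmem
        have hpredne : (⟨i0, k.castSucc⟩ : Σ i : Fin m, Fin (n i + 1)) ≠ v := by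
          intro h
          exact (Fin.castSucc_lt_succ (i := k)).ne (snow_sigma_snd h)
        have hpredmem' : (⟨i0, k.castSucc⟩ : Σ i : Fin m, Fin (n i + 1)) ∈ s' :=
          Finset.mem_erase.mpr ⟨hpredne, hpredmem⟩
        have hb0 : x.2 ⟨i0, k.castSucc⟩ hpredmem' ∈ A i0 k.castSucc :=
          hx2 _ hpredmem'
        rw [hAstep i0 k, Finset.mem_filter] at hb0
        obtain ⟨_, b, hbA, hbp⟩ := hb0
        refine ⟨b, hbA, fun h0 => absurd h0 (Fin.succ_ne_zero k), ?_⟩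
        intro k' hk' hp
        have hkk : k' = k := Fin.succ_injective _ hk'.symm
        subst hkk
        exact hbp
    obtain ⟨b, hbA, hbhead, hbstep⟩ := hbex
    refine ⟨b, ?_⟩
    rw [mem_snowPartialJoin]
    simp only [hExt]
    refine ⟨hx1, ?_, ?_, ?_⟩
    · -- pi membership
      intro w hw
      by_cases hne : w = v
      · subst hne
        rw [snowExt_same]
        exact hbA
      · rw [snowExt_ne _ _ _ _ _ hw hne]
        exact hx2 _ _
    · -- head conditions
      intro i h
      by_cases hne : (⟨i, 0⟩ : Σ i : Fin m, Fin (n i + 1)) = v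
      · have hi : i = i0 := congrArg Sigma.fst hne
        subst hi
        have hj : (0 : Fin (n i + 1)) = jv := snow_sigma_snd hne
        subst hj
        show phead i x.1 (snowExt s v hvmem x.2 b ⟨i, 0⟩ h)
        rw [snowExt_same]
        exact hbhead rfl
      · show phead i x.1 (snowExt s v hvmem x.2 b ⟨i, 0⟩ h)
        rw [snowExt_ne _ _ _ _ _ h hne]
        exact hx3 i _
    · -- step conditions
      intro i j h h'
      by_cases htop : (⟨i, j.succ⟩ : Σ i : Fin m, Fin (n i + 1)) = v
      · have hi : i = i0 := congrArg Sigma.fst htop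
        subst hi
        have hj : j.succ = jv := snow_sigma_snd htop
        subst hj
        have hne' : (⟨i, j.castSucc⟩ : Σ i : Fin m, Fin (n i + 1)) ≠ v := by
          intro hh
          exact (Fin.castSucc_lt_succ (i := j)).ne (snow_sigma_snd hh)
        show pstep i j (snowExt s v hvmem x.2 b ⟨i, j.castSucc⟩ h')
          (snowExt s v hvmem x.2 b ⟨i, j.succ⟩ h)
        rw [snowExt_same, snowExt_ne _ _ _ _ _ h' hne']
        exact hbstep j rfl _
      · have hbot : (⟨i, j.castSucc⟩ : Σ i : Fin m, Fin (n i + 1)) ≠ v := by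
          intro hh
          have hi : i = i0 := congrArg Sigma.fst hh
          subst hi
          have hj : j.castSucc = jv := snow_sigma_snd hh
          exact hmax j hj.symm h
        show pstep i j (snowExt s v hvmem x.2 b ⟨i, j.castSucc⟩ h')
          (snowExt s v hvmem x.2 b ⟨i, j.succ⟩ h)
        rw [snowExt_ne _ _ _ _ _ h htop, snowExt_ne _ _ _ _ _ h' hbot]
        exact hx4 i j _ _
  -- conclude by a bijection
  symm
  refine Finset.card_bij (fun x hx => Ext x (exist x hx).choose) ?_ ?_ ?_
  · intro x hx
    exact (exist x hx).choose_spec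
  · intro x₁ hx₁ x₂ hx₂ heq
    have heq' : Ext x₁ (exist x₁ hx₁).choose = Ext x₂ (exist x₂ hx₂).choose := heq
    have h1 : (Ext x₁ (exist x₁ hx₁).choose).1 = (Ext x₂ (exist x₂ hx₂).choose).1 :=
      congrArg Prod.fst heq'
    refine Prod.ext h1 ?_
    funext w hw
    have hwne : w ≠ v := (Finset.mem_erase.mp hw).1
    have hws : w ∈ s := (Finset.mem_erase.mp hw).2
    have h2 : snowExt s v hvmem x₁.2 (exist x₁ hx₁).choose w hws
        = snowExt s v hvmem x₂.2 (exist x₂ hx₂).choose w hws :=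
      congrFun (congrFun (congrArg Prod.snd heq') w) hws
    rw [snowExt_ne _ _ _ _ _ hws hwne, snowExt_ne _ _ _ _ _ hws hwne] at h2
    exact h2
  · intro y hy
    -- restriction
    set x : α × ∀ w ∈ s', β w.1 w.2 :=
      (y.1, fun w hw => y.2 w (Finset.mem_of_mem_erase hw)) with hxdef
    have hyy := hy
    rw [mem_snowPartialJoin] at hyy
    obtain ⟨hy1, hy2, hy3, hy4⟩ := hyy
    have hxmem : x ∈ snowPartialJoin R₀' A phead pstep s' := by
      rw [mem_snowPartialJoin]
      refine ⟨hy1, fun w hw => hy2 w _, fun i h => hy3 i _, fun i j h h' => hy4 i j _ _⟩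
    have hext : Ext x (y.2 v hvmem) = y := by
      refine Prod.ext rfl ?_
      funext w hw
      by_cases hne : w = v
      · subst hne
        exact snowExt_same s v hvmem x.2 (y.2 v hvmem) hw
      · show snowExt s v hvmem x.2 (y.2 v hvmem) w hw = y.2 w hw
        rw [snowExt_ne _ _ _ _ _ hw hne]
    refine ⟨x, hxmem, ?_⟩
    have hb := (exist x hxmem).choose_spec
    have hb2 : Ext x (y.2 v hvmem) ∈ snowPartialJoin R₀' A phead pstep s := by
      rw [hext]; exact hy
    have hch : (exist x hxmem).choose = y.2 v hvmem := uniq x _ _ hb hb2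
    show Ext x (exist x hxmem).choose = y
    rw [hch]
    exact hext

end SnowAux

/-- **Downward-closed partial snowflake join invariance
(core of the proof of Lemma 5.3).**
For a snowflake query with PKFK joins, the partial snowflake join over any
downward-closed set `s` of dimension vertices has the same cardinality as the filtered
fact table `R₀'`. -/
theorem snowflake_partial_join_invariance {α : Type*} {m : ℕ} {n : Fin m → ℕ}
    {β : ∀ i : Fin m, Fin (n i + 1) → Type*}
    (R₀ : Finset α) (R : ∀ i j, Finset (β i j))
    (phead : ∀ i, α → β i 0 → Prop) [∀ i a b, Decidable (phead i a b)]
    (pstep : ∀ i (j : Fin (n i)), β i j.castSucc → β i j.succ → Prop)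
    [∀ i j b b', Decidable (pstep i j b b')]
    (hkeyhead : ∀ (i : Fin m) (a : α), ∀ b₁ ∈ R i 0, ∀ b₂ ∈ R i 0,
      phead i a b₁ → phead i a b₂ → b₁ = b₂)
    (hkeystep : ∀ (i : Fin m) (j : Fin (n i)) (b : β i j.castSucc),
      ∀ b₁ ∈ R i j.succ, ∀ b₂ ∈ R i j.succ,
        pstep i j b b₁ → pstep i j b b₂ → b₁ = b₂)
    (A : ∀ i j, Finset (β i j))
    (hAlast : ∀ i, A i (Fin.last (n i)) = R i (Fin.last (n i)))
    (hAstep : ∀ (i : Fin m) (j : Fin (n i)), A i j.castSucc =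
      (R i j.castSucc).filter fun b => ∃ b' ∈ A i j.succ, pstep i j b b')
    (R₀' : Finset α)
    (hR₀' : R₀' = R₀.filter fun a => ∀ i, ∃ b ∈ A i 0, phead i a b) :
    ∀ s : Finset (Σ i : Fin m, Fin (n i + 1)),
      (∀ (i : Fin m) (j : Fin (n i)),
        (⟨i, j.succ⟩ : Σ i : Fin m, Fin (n i + 1)) ∈ s →
          (⟨i, j.castSucc⟩ : Σ i : Fin m, Fin (n i + 1)) ∈ s) →
      (snowPartialJoin R₀' A phead pstep s).card = R₀'.card := by
  classical
  have hAR : ∀ i j, A i j ⊆ R i j := by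
    intro i j
    induction j using Fin.lastCases with
    | last => rw [hAlast]
    | cast k => rw [hAstep]; exact Finset.filter_subset _ _
  have hhead : ∀ a ∈ R₀', ∀ i, ∃ b ∈ A i 0, phead i a b := by
    intro a ha i
    rw [hR₀', Finset.mem_filter] at ha
    exact ha.2 i
  intro s
  induction s using Finset.strongInduction with
  | _ s ih =>
    intro hdc
    rcases s.eq_empty_or_nonempty with rfl | hne
    · -- base case: empty set
      have : snowPartialJoin R₀' A phead pstep (∅ : Finset (Σ i : Fin m, Fin (n i + 1)))
          = R₀' ×ˢ ((∅ : Finset (Σ i : Fin m, Fin (n i + 1))).pi fun v => A v.1 v.2) := by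
        apply Finset.filter_true_of_mem
        intro x _
        exact ⟨fun i h => absurd h (Finset.notMem_empty _),
          fun i j h _ => absurd h (Finset.notMem_empty _)⟩
      rw [this, Finset.card_product, Finset.card_pi]
      simp
    · -- pick a maximal vertex
      obtain ⟨⟨i0, j0⟩, hmem0⟩ := hne
      have hTne : (Finset.univ.filter fun j : Fin (n i0 + 1) =>
          (⟨i0, j⟩ : Σ i : Fin m, Fin (n i + 1)) ∈ s).Nonempty :=
        ⟨j0, by simp [hmem0]⟩
      set T := Finset.univ.filter fun j : Fin (n i0 + 1) =>
        (⟨i0, j⟩ : Σ i : Fin m, Fin (n i + 1)) ∈ s with hTdef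
      set jv := T.max' hTne with hjvdef
      have hvmem : (⟨i0, jv⟩ : Σ i : Fin m, Fin (n i + 1)) ∈ s :=
        (Finset.mem_filter.mp (T.max'_mem hTne)).2
      have hmax : ∀ k : Fin (n i0), jv = k.castSucc →
          (⟨i0, k.succ⟩ : Σ i : Fin m, Fin (n i + 1)) ∉ s := by
        intro k hk hmem
        have hT : k.succ ∈ T := Finset.mem_filter.mpr ⟨Finset.mem_univ _, hmem⟩
        have hle : k.succ ≤ jv := T.le_max' _ hT
        rw [hk] at hle
        exact absurd hle (not_le.mpr (Fin.castSucc_lt_succ (i := k)))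
      have hcard := snow_erase R phead pstep hkeyhead hkeystep A hAR hAstep R₀'
        hhead s hdc i0 jv hvmem hmax
      have hss : s.erase ⟨i0, jv⟩ ⊂ s := Finset.erase_ssubset hvmem
      have hdc' : ∀ (i : Fin m) (j : Fin (n i)),
          (⟨i, j.succ⟩ : Σ i : Fin m, Fin (n i + 1)) ∈ s.erase ⟨i0, jv⟩ →
            (⟨i, j.castSucc⟩ : Σ i : Fin m, Fin (n i + 1)) ∈ s.erase ⟨i0, jv⟩ := by
        intro i j hj
        have hjs : (⟨i, j.succ⟩ : Σ i : Fin m, Fin (n i + 1)) ∈ s :=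
          Finset.mem_of_mem_erase hj
        have hjs' := hdc i j hjs
        refine Finset.mem_erase.mpr ⟨?_, hjs'⟩
        intro hh
        have hi : i = i0 := congrArg Sigma.fst hh
        subst hi
        have hjj : j.castSucc = jv := snow_sigma_snd hh
        exact hmax j hjj.symm hjs
      rw [hcard]
      exact ih _ hss hdc'
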